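/- Let φ be a monic irreducible polynomial of degree d over F_{q^2} with φ(0) ≠ 0 satisfying φ = φ̃. If ρ is a root of φ in F_{q^{2d}}, then there exists a positive integer j ≤ d such that the multiplicative order of ρ divides q^{2j-1} + 1. -/

import Mathlib

open Polynomial
-- aux: element fixed by Frobenius of base field is in range of algebraMap
lemma aux_fixed_mem_range (F E : Type) [Field F] [Fintype F] [Field E] [Fintype E]
    [Algebra F E] (c : E) (hc : c ^ Fintype.card F = c) :
    ∃ a : F, algebraMap F E a = c := by
  classical
  set Q := Fintype.card F with hQ
  have hQ1 : 1 < Q := Fintype.one_lt_card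
  set f : E[X] := X ^ Q - X with hf
  have hf0 : f ≠ 0 := FiniteField.X_pow_card_sub_X_ne_zero E hQ1
  have hdeg : f.natDegree = Q := FiniteField.X_pow_card_sub_X_natDegree_eq E hQ1
  set T : Finset E := Finset.univ.image (algebraMap F E) with hT
  have hinj : Function.Injective (algebraMap F E) := (algebraMap F E).injective
  have hcardT : T.card = Q := by
    rw [hT, Finset.card_image_of_injective _ hinj, Finset.card_univ]
  have hTroots : T.val ≤ f.roots := by
    refine Finset.val_le_iff_val_subset.mpr ?_
    intro x hx
    rw [Finset.mem_val, hT, Finset.mem_image] at hx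
    obtain ⟨a, -, rfl⟩ := hx
    rw [mem_roots hf0]
    simp only [IsRoot, hf, eval_sub, eval_pow, eval_X]
    rw [← map_pow, FiniteField.pow_card, sub_self]
  have hcard : f.roots.card ≤ Q := hdeg ▸ f.card_roots'
  have heq : f.roots = T.val := by
    refine (Multiset.eq_of_le_of_card_le hTroots ?_).symm
    calc Multiset.card f.roots ≤ Q := hcard
      _ = T.card := hcardT.symm
      _ = Multiset.card T.val := rfl
  have hcroot : c ∈ f.roots := by
    rw [mem_roots hf0]
    simp only [IsRoot, hf, eval_sub, eval_pow, eval_X, hc, sub_self]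
  rw [heq, Finset.mem_val, hT, Finset.mem_image] at hcroot
  obtain ⟨a, -, ha⟩ := hcroot
  exact ⟨a, ha⟩


/-- If `φ` is a monic irreducible polynomial of degree `d` over the field with `q^2`
elements, with nonzero constant term and `φ = φ̃`, and `ρ` is a root of `φ` in the
field with `q^{2d}` elements, then there is `1 ≤ j ≤ d` such that the multiplicative
order of `ρ` divides `q^{2j-1} + 1`. -/
theorem order_root_selfconj_dvd (q d : ℕ) (hq : IsPrimePow q) (hd : 0 < d)
    (F : Type) [Field F] [Fintype F] (hF : Fintype.card F = q ^ 2)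
    (E : Type) [Field E] [Fintype E] [Algebra F E] (hE : Fintype.card E = q ^ (2 * d))
    (φ : Polynomial F) (hmonic : φ.Monic) (hirr : Irreducible φ)
    (hdeg : φ.natDegree = d) (h0 : φ.coeff 0 ≠ 0)
    (hself : φ = X ^ d + ∑ j ∈ Finset.range d,
        C ((φ.coeff 0)⁻¹ ^ q * (φ.coeff (d - j)) ^ q) * X ^ j)
    (ρ : E) (hρ : aeval ρ φ = 0) :
    ∃ j : ℕ, 1 ≤ j ∧ j ≤ d ∧ orderOf ρ ∣ q ^ (2 * j - 1) + 1 := by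
  classical
  have hq2 : 2 ≤ q := hq.two_le
  obtain ⟨p, n, hp, hn, hqe⟩ := hq
  have hpp : p.Prime := hp.nat_prime
  have hq0 : 0 < q := by omega
  have hA : Function.Injective (algebraMap F E) := (algebraMap F E).injective
  set A := algebraMap F E with hAdef
  -- characteristic of E is p
  have hcharE : CharP E p := by
    have h1 : CharP E (ringChar E) := ringChar.charP E
    have h2 : (ringChar E).Prime := CharP.char_is_prime E (ringChar E)
    obtain ⟨m, -, hm⟩ := FiniteField.card E (ringChar E)
    have : ringChar E ∣ p ^ (n * (2 * d)) := by
      calc ringChar E ∣ ringChar E ^ (m : ℕ) := dvd_pow_self _ m.ne_zero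
        _ = q ^ (2 * d) := by rw [← hm, hE]
        _ = p ^ (n * (2 * d)) := by rw [← hqe, ← pow_mul]
    have : ringChar E = p := by
      exact (Nat.prime_dvd_prime_iff_eq h2 hpp).mp (h2.dvd_of_dvd_pow this)
    rwa [this] at h1
  haveI := hcharE
  -- rho nonzero
  have hρ0 : ρ ≠ 0 := by
    intro h
    apply h0
    apply hA
    have : aeval (0 : E) φ = A (φ.coeff 0) := by
      rw [aeval_def, eval₂_eq_eval_map, ← coeff_zero_eq_eval_zero, coeff_map]
    rw [map_zero, ← this]
    exact h ▸ hρ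
  have hρpow : ρ ^ (q ^ 2) ^ d = ρ := by
    have := FiniteField.pow_card ρ
    rwa [hE, show q ^ (2 * d) = (q ^ 2) ^ d by rw [← pow_mul]] at this
  -- the product of conjugate factors
  set f : ℕ → E[X] := fun i => X - C (ρ ^ (q ^ 2) ^ i) with hfdef
  set g : E[X] := ∏ i ∈ Finset.range d, f i with hgdef
  haveI : Fact p.Prime := ⟨hpp⟩
  have hfd0 : f d = f 0 := by simp only [hfdef, hρpow, pow_zero, pow_one]
  -- frobenius invariance of g
  set ψ : E →+* E := iterateFrobenius E p (2 * n) with hψdef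
  have hψ : ∀ x : E, ψ x = x ^ q ^ 2 := by
    intro x
    rw [hψdef, iterateFrobenius_def, ← hqe, ← pow_mul, Nat.mul_comm 2 n]
  have hgmap : g.map ψ = g := by
    rw [hgdef, Polynomial.map_prod]
    have h1 : ∀ i, (f i).map ψ = f (i + 1) := by
      intro i
      simp only [hfdef, Polynomial.map_sub, map_X, map_C, hψ]
      rw [← pow_mul, ← pow_succ]
    simp only [h1]
    have h2 : (∏ i ∈ Finset.range d, f (i + 1)) * f 0 = (∏ i ∈ Finset.range d, f i) * f 0 := by
      rw [← Finset.prod_range_succ', Finset.prod_range_succ, hfd0, mul_comm]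
    exact mul_right_cancel₀ (X_sub_C_ne_zero _) h2
  have hcoeff : ∀ k, ∃ a : F, A a = g.coeff k := by
    intro k
    apply aux_fixed_mem_range
    rw [hF]
    calc g.coeff k ^ q ^ 2 = ψ (g.coeff k) := (hψ _).symm
      _ = (g.map ψ).coeff k := (coeff_map ψ k).symm
      _ = g.coeff k := by rw [hgmap]
  -- lift g to F
  obtain ⟨g₀, hg₀⟩ : ∃ g₀ : F[X], g₀.map A = g := by
    have : g ∈ Polynomial.lifts A := by
      rw [Polynomial.lifts_iff_coeff_lifts]
      intro k
      obtain ⟨a, ha⟩ := hcoeff k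
      exact ⟨a, ha⟩
    obtain ⟨g₀, hg₀⟩ := this
    exact ⟨g₀, hg₀⟩
  have hgmonic : g.Monic := monic_prod_of_monic _ _ fun i _ => monic_X_sub_C _
  have hgdeg : g.natDegree = d := by
    rw [hgdef]
    rw [natDegree_prod _ _ fun i _ => X_sub_C_ne_zero _]
    simp only [hfdef, natDegree_X_sub_C, Finset.sum_const, Finset.card_range, smul_eq_mul, mul_one]
  have hg₀monic : g₀.Monic := by
    have := hgmonic
    rw [← hg₀] at this
    exact (hA.monic_map_iff).mpr this
  have hg₀deg : g₀.natDegree = d := by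
    rw [← hgdeg, ← hg₀, natDegree_map_eq_of_injective hA]
  have hg₀root : aeval ρ g₀ = 0 := by
    rw [aeval_def, eval₂_eq_eval_map, hg₀, hgdef, eval_prod]
    refine Finset.prod_eq_zero (Finset.mem_range.mpr hd) ?_
    simp only [hfdef, pow_zero, pow_one, eval_sub, eval_X, eval_C, sub_self]
  -- φ = g₀
  have hφmin : φ = minpoly F ρ := minpoly.eq_of_irreducible_of_monic hirr hρ hmonic
  have hdvd : φ ∣ g₀ := hφmin ▸ minpoly.dvd F ρ hg₀root
  have hφg₀ : φ = g₀ := by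
    obtain ⟨c, hc⟩ := hdvd
    have hφ0 : φ ≠ 0 := hmonic.ne_zero
    have hc0 : c ≠ 0 := by
      intro h
      rw [h, mul_zero] at hc
      exact hg₀monic.ne_zero hc
    have hcdeg : c.natDegree = 0 := by
      have := natDegree_mul hφ0 hc0
      rw [← hc, hg₀deg, hdeg] at this
      omega
    have hlc : c.leadingCoeff = 1 := by
      have := hg₀monic
      rw [hc] at this
      have h2 : (φ * c).leadingCoeff = 1 := this
      rw [leadingCoeff_mul, hmonic.leadingCoeff, one_mul] at h2
      exact h2
    have : c = 1 := by
      rw [Polynomial.eq_C_of_natDegree_eq_zero hcdeg]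
      rw [Polynomial.leadingCoeff, hcdeg] at hlc
      rw [hlc, map_one]
    rw [hc, this, mul_one]
  have hφmap : φ.map A = g := by rw [hφg₀, hg₀]
  -- the twisted-reciprocal condition gives a new root y = (ρ^q)⁻¹
  set y : E := (ρ ^ q)⁻¹ with hydef
  set ψq : E →+* E := iterateFrobenius E p n with hψqdef
  have hψq : ∀ x : E, ψq x = x ^ q := fun x => by
    rw [hψqdef, iterateFrobenius_def, hqe]
  have hρq0 : ρ ^ q ≠ 0 := pow_ne_zero _ hρ0
  have hAρ0 : A (φ.coeff 0) ≠ 0 := fun h => h0 (hA (by rw [h, map_zero]))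
  set t : ℕ → E := fun k => (A (φ.coeff k) * ρ ^ k) ^ q with htdef
  have hsum : ∑ k ∈ Finset.range (d + 1), t k = 0 := by
    have h1 : aeval ρ φ = ∑ k ∈ Finset.range (d + 1), A (φ.coeff k) * ρ ^ k := by
      rw [aeval_eq_sum_range, hdeg]
      exact Finset.sum_congr rfl fun k _ => by rw [Algebra.smul_def]
    calc ∑ k ∈ Finset.range (d + 1), t k
        = ∑ k ∈ Finset.range (d + 1), ψq (A (φ.coeff k) * ρ ^ k) :=
          Finset.sum_congr rfl fun k _ => by rw [htdef, hψq]
      _ = ψq (∑ k ∈ Finset.range (d + 1), A (φ.coeff k) * ρ ^ k) := (map_sum ψq _ _).symm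
      _ = ψq (aeval ρ φ) := by rw [h1]
      _ = 0 := by rw [hρ, map_zero]
  have hval : aeval y φ = y ^ d + ∑ j ∈ Finset.range d,
      A ((φ.coeff 0)⁻¹ ^ q * (φ.coeff (d - j)) ^ q) * y ^ j := by
    conv_lhs => rw [hself]
    simp only [map_add, map_sum, map_mul, map_pow, aeval_C, aeval_X, hAdef]
  have hterm0 : A (φ.coeff 0) ^ q * ρ ^ (q * d) * y ^ d = t 0 := by
    have h1 : ρ ^ (q * d) * y ^ d = 1 := by
      rw [hydef, inv_pow, pow_mul, mul_inv_cancel₀ (pow_ne_zero d hρq0)]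
    rw [mul_assoc, h1, mul_one, htdef]
    simp
  have htermj : ∀ j, j < d → A (φ.coeff 0) ^ q * ρ ^ (q * d) *
      (A ((φ.coeff 0)⁻¹ ^ q * (φ.coeff (d - j)) ^ q) * y ^ j) = t (d - j) := by
    intro j hj
    have hAa : (A (φ.coeff 0))⁻¹ ^ q * A (φ.coeff 0) ^ q = 1 := by
      rw [← mul_pow, inv_mul_cancel₀ hAρ0, one_pow]
    have h1 : ρ ^ (q * d) * y ^ j = ρ ^ (q * (d - j)) := by
      have heq : ρ ^ (q * (d - j)) * ρ ^ (q * j) = ρ ^ (q * d) := by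
        rw [← pow_add, ← Nat.mul_add, Nat.sub_add_cancel hj.le]
      rw [hydef, inv_pow, ← pow_mul, ← heq, mul_assoc,
        mul_inv_cancel₀ (pow_ne_zero _ hρ0), mul_one]
    calc A (φ.coeff 0) ^ q * ρ ^ (q * d) *
        (A ((φ.coeff 0)⁻¹ ^ q * (φ.coeff (d - j)) ^ q) * y ^ j)
        = ((A (φ.coeff 0))⁻¹ ^ q * A (φ.coeff 0) ^ q) *
          (A (φ.coeff (d - j)) ^ q * (ρ ^ (q * d) * y ^ j)) := by
          rw [map_mul, map_pow, map_pow, map_inv₀]; ring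
      _ = A (φ.coeff (d - j)) ^ q * ρ ^ (q * (d - j)) := by rw [hAa, one_mul, h1]
      _ = t (d - j) := by
          simp only [htdef]
          rw [mul_pow, ← pow_mul, mul_comm q (d - j)]
  have hyroot : aeval y φ = 0 := by
    have hmain : A (φ.coeff 0) ^ q * ρ ^ (q * d) * aeval y φ = 0 := by
      rw [hval, mul_add, Finset.mul_sum, hterm0]
      rw [Finset.sum_congr rfl (fun j hj => htermj j (Finset.mem_range.mp hj))]
      have hre : ∑ j ∈ Finset.range d, t (d - j) = ∑ j ∈ Finset.range d, t (j + 1) := by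
        rw [← Finset.sum_range_reflect (fun j => t (j + 1)) d]
        refine Finset.sum_congr rfl fun j hj => ?_
        rw [Finset.mem_range] at hj
        congr 1
        omega
      rw [hre, add_comm, ← Finset.sum_range_succ', hsum]
    have hne : A (φ.coeff 0) ^ q * ρ ^ (q * d) ≠ 0 :=
      mul_ne_zero (pow_ne_zero _ hAρ0) (pow_ne_zero _ hρ0)
    exact (mul_eq_zero.mp hmain).resolve_left hne
  -- y is a Frobenius conjugate of ρ
  have heval : eval y (φ.map A) = 0 := by
    rw [eval_map, ← aeval_def]
    exact hyroot
  rw [hφmap, hgdef, eval_prod] at heval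
  obtain ⟨i, hi, hzero⟩ := Finset.prod_eq_zero_iff.mp heval
  rw [Finset.mem_range] at hi
  have hyi : y = ρ ^ (q ^ 2) ^ i := by
    simp only [hfdef, eval_sub, eval_X, eval_C] at hzero
    exact sub_eq_zero.mp hzero
  have hone : ρ ^ ((q ^ 2) ^ i + q) = 1 := by
    rw [pow_add, ← hyi, hydef, inv_mul_cancel₀ hρq0]
  have hordi : orderOf ρ ∣ (q ^ 2) ^ i + q := orderOf_dvd_of_pow_eq_one hone
  rcases Nat.eq_zero_or_pos i with rfl | hipos
  · refine ⟨1, le_refl 1, hd, ?_⟩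
    have h2 : (q ^ 2) ^ 0 + q = q ^ (2 * 1 - 1) + 1 := by norm_num [add_comm]
    rwa [h2] at hordi
  · refine ⟨i, hipos, hi.le, ?_⟩
    have hcop : Nat.Coprime (orderOf ρ) q := by
      have h1 : orderOf ρ ∣ q ^ (2 * d) - 1 := by
        apply orderOf_dvd_of_pow_eq_one
        have := FiniteField.pow_card_sub_one_eq_one ρ hρ0
        rwa [hE] at this
      have h2 : Nat.Coprime (q ^ (2 * d) - 1) (q ^ (2 * d)) := by
        have h3 : q ^ (2 * d) - 1 + 1 = q ^ (2 * d) := Nat.succ_pred_eq_of_pos (pow_pos hq0 _)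
        have h5 : Nat.Coprime (q ^ (2 * d) - 1) (1 + (q ^ (2 * d) - 1)) :=
          Nat.coprime_add_self_right.mpr (Nat.coprime_one_right _)
        rwa [show 1 + (q ^ (2 * d) - 1) = q ^ (2 * d) by omega] at h5
      exact (h2.coprime_dvd_left h1).coprime_dvd_right (dvd_pow_self q (by omega))
    have hsplit : (q ^ 2) ^ i + q = q * (q ^ (2 * i - 1) + 1) := by
      rw [← pow_mul]
      have h4 : 2 * i = (2 * i - 1) + 1 := by omega
      conv_lhs => rw [h4]
      rw [pow_succ]
      ring
    rw [hsplit] at hordi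
    exact hcop.dvd_of_dvd_mul_left hordi
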